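/- Let P = {x ∈ ℝⁿ : Ax = b, Bx ≤ d} and c ∈ ℝⁿ. Let x₀ ∈ P, let y be a steepest-descent augmenting direction at x₀ (y is strictly feasible at x₀, By ≠ 0, and cᵀy/‖By‖₁ ≤ cᵀz/‖Bz‖₁ for every z strictly feasible at x₀ with Bz ≠ 0) with cᵀy < 0, let α > 0 be such that x₁ := x₀ + αy ∈ P and x₀ + α'y ∉ P for all α' > α, and let y' be a steepest-descent augmenting direction at x₁. Then the steepness of consecutive steepest-descent directions is non-increasing in magnitude: cᵀy/‖By‖₁ ≤ cᵀy'/‖By'‖₁. -/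
import Mathlib


open Finset Matrix

/-- `y` is strictly feasible at `x₀` with respect to the set `P`. -/
def StrictlyFeasible {n : ℕ} (P : Set (Fin n → ℝ)) (x₀ y : Fin n → ℝ) : Prop :=
  ∃ α : ℝ, 0 < α ∧ x₀ + α • y ∈ P

/-- `y` is a steepest-descent augmenting direction at `x₀` with respect to `P`, `B`, `c`. -/
def IsSteepestDescentDirection {n mB : ℕ} (P : Set (Fin n → ℝ))
    (B : Matrix (Fin mB) (Fin n) ℝ) (c : Fin n → ℝ) (x₀ y : Fin n → ℝ) : Prop :=
  StrictlyFeasible P x₀ y ∧ B.mulVec y ≠ 0 ∧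
    ∀ z : Fin n → ℝ, StrictlyFeasible P x₀ z → B.mulVec z ≠ 0 →
      c ⬝ᵥ y / (∑ i, |B.mulVec y i|) ≤ c ⬝ᵥ z / (∑ i, |B.mulVec z i|)

lemma sum_abs_pos_of_ne_zero {m : ℕ} (v : Fin m → ℝ) (hv : v ≠ 0) :
    0 < ∑ i, |v i| := by
  obtain ⟨i, hi⟩ := Function.ne_iff.mp hv
  exact Finset.sum_pos' (fun j _ => abs_nonneg _) ⟨i, Finset.mem_univ i, abs_pos.mpr hi⟩

/-- Along a steepest-descent augmentation scheme, the steepness of consecutive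
steepest-descent directions is non-increasing in magnitude. -/
theorem steepness_nonincreasing
    (n mA mB : ℕ) (A : Matrix (Fin mA) (Fin n) ℝ) (B : Matrix (Fin mB) (Fin n) ℝ)
    (b : Fin mA → ℝ) (d : Fin mB → ℝ) (c : Fin n → ℝ)
    (P : Set (Fin n → ℝ))
    (hP : P = {x | A.mulVec x = b ∧ ∀ i, B.mulVec x i ≤ d i})
    (x₀ : Fin n → ℝ) (hx₀ : x₀ ∈ P)
    (y : Fin n → ℝ) (hy : IsSteepestDescentDirection P B c x₀ y)
    (hcy : c ⬝ᵥ y < 0)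
    (α : ℝ) (hα : 0 < α)
    (x₁ : Fin n → ℝ) (hx₁ : x₁ = x₀ + α • y)
    (hx₁P : x₁ ∈ P)
    (hmax : ∀ α' : ℝ, α < α' → x₀ + α' • y ∉ P)
    (y' : Fin n → ℝ) (hy' : IsSteepestDescentDirection P B c x₁ y') :
    c ⬝ᵥ y / (∑ i, |B.mulVec y i|) ≤ c ⬝ᵥ y' / (∑ i, |B.mulVec y' i|) := by
  obtain ⟨hyfeas, hBy, hymin⟩ := hy
  obtain ⟨⟨β, hβ, hβP⟩, hBy', hy'min⟩ := hy'
  have hNypos : 0 < ∑ i, |B.mulVec y i| := sum_abs_pos_of_ne_zero _ hBy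
  have hNy'pos : 0 < ∑ i, |B.mulVec y' i| := sum_abs_pos_of_ne_zero _ hBy'
  rcases le_or_gt 0 (c ⬝ᵥ y') with h0 | h0
  · exact le_trans (le_of_lt (div_neg_of_neg_of_pos hcy hNypos))
      (div_nonneg h0 hNy'pos.le)
  · set z : Fin n → ℝ := α • y + β • y' with hz
    have hzP : x₀ + z ∈ P := by
      have hxz : x₀ + z = x₁ + β • y' := by rw [hx₁, hz]; module
      rw [hxz]; exact hβP
    have hcz : c ⬝ᵥ z = α * (c ⬝ᵥ y) + β * (c ⬝ᵥ y') := by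
      simp [hz, dotProduct_add, dotProduct_smul, smul_eq_mul]
    have hBz : B.mulVec z = α • B.mulVec y + β • B.mulVec y' := by
      simp [hz, mulVec_add, mulVec_smul]
    by_cases hBz0 : B.mulVec z = 0
    · -- impossible: y' would not be steepest at x₁
      exfalso
      have hAz : A.mulVec z = 0 := by
        have h1 : A.mulVec (x₀ + z) = b := (hP ▸ hzP).1
        have h2 : A.mulVec x₀ = b := (hP ▸ hx₀).1
        rw [mulVec_add, h2] at h1
        simpa using h1
      have hwP : x₁ + β • (y' + z) ∈ P := by
        have hsplit : x₁ + β • (y' + z) = (x₁ + β • y') + β • z := by module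
        have hβP' := hP ▸ hβP
        rw [hsplit, hP]
        constructor
        · rw [mulVec_add, mulVec_smul, hAz, smul_zero, add_zero]
          exact hβP'.1
        · intro i
          rw [mulVec_add, mulVec_smul, hBz0, smul_zero, add_zero]
          exact hβP'.2 i
      have hBw : B.mulVec (y' + z) = B.mulVec y' := by rw [mulVec_add, hBz0, add_zero]
      have hmin := hy'min (y' + z) ⟨β, hβ, hwP⟩ (by rw [hBw]; exact hBy')
      rw [hBw, dotProduct_add] at hmin
      rw [div_le_div_iff₀ hNy'pos hNy'pos] at hmin
      have h3 := le_of_mul_le_mul_right hmin hNy'pos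
      nlinarith [h3, hcz, mul_pos hα (neg_pos.mpr hcy), mul_pos hβ (neg_pos.mpr h0)]
    · have hNzpos : 0 < ∑ i, |B.mulVec z i| := sum_abs_pos_of_ne_zero _ hBz0
      have hmin := hymin z ⟨1, one_pos, by simpa using hzP⟩ hBz0
      rw [div_le_div_iff₀ hNypos hNzpos] at hmin
      have htri : (∑ i, |B.mulVec z i|) ≤
          α * (∑ i, |B.mulVec y i|) + β * (∑ i, |B.mulVec y' i|) := by
        rw [Finset.mul_sum, Finset.mul_sum, ← Finset.sum_add_distrib]
        apply Finset.sum_le_sum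
        intro i _
        rw [hBz]
        simp only [Pi.add_apply, Pi.smul_apply, smul_eq_mul]
        calc |α * B.mulVec y i + β * B.mulVec y' i|
            ≤ |α * B.mulVec y i| + |β * B.mulVec y' i| := abs_add_le _ _
          _ = α * |B.mulVec y i| + β * |B.mulVec y' i| := by
              rw [abs_mul, abs_mul, abs_of_pos hα, abs_of_pos hβ]
      have hmul : (c ⬝ᵥ y) * (α * (∑ i, |B.mulVec y i|) + β * (∑ i, |B.mulVec y' i|))
          ≤ (c ⬝ᵥ y) * (∑ i, |B.mulVec z i|) :=
        mul_le_mul_of_nonpos_left htri hcy.le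
      rw [div_le_div_iff₀ hNypos hNy'pos]
      nlinarith [hmin, hmul, hcz, hβ, hNypos, hNy'pos]
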